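/- arXiv:2109.04068 — 4 statements merged into one kernel-verified Lean document; each statement's English description precedes it below -/
import Mathlib

section
/- For every sufficiently large integer k there exists a prime number p that can be written as the sum of k pairwise different Fibonacci numbers (consecutive Fibonacci numbers allowed). -/
open Finset

namespace FibPrimeAux

/-- Every natural number has a Zeckendorf-type representation: a sum of Fibonacci
numbers with distinct indices `≥ 2`, no two indices consecutive, and each summand `≤ n`. -/
lemma exists_rep (n : ℕ) : ∃ S : Finset ℕ,
    (∀ i ∈ S, 2 ≤ i) ∧ (∀ i ∈ S, i + 1 ∉ S) ∧ (∀ i ∈ S, Nat.fib i ≤ n) ∧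
    ∑ i ∈ S, Nat.fib i = n := by
  induction n using Nat.strong_induction_on with
  | _ n ih =>
    rcases Nat.eq_zero_or_pos n with h0 | h0
    · exact ⟨∅, by simp [h0]⟩
    have h2 : Nat.fib 2 ≤ n := by rw [Nat.fib_two]; exact h0
    have hmex : ∃ m, 2 ≤ m ∧ Nat.fib m ≤ n ∧ n < Nat.fib (m + 1) := by
      refine ⟨Nat.findGreatest (fun i => Nat.fib i ≤ n) (n + 1), ?_, ?_, ?_⟩
      · exact Nat.le_findGreatest (by omega) h2
      · exact Nat.findGreatest_spec (P := fun i => Nat.fib i ≤ n) (m := 2) (by omega) h2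
      · set m := Nat.findGreatest (fun i => Nat.fib i ≤ n) (n + 1) with hm
        by_cases hc : m + 1 ≤ n + 1
        · have := Nat.findGreatest_is_greatest (P := fun i => Nat.fib i ≤ n)
            (n := n + 1) (k := m + 1) (by omega) hc
          omega
        · have h1 : n + 2 ≤ m + 1 := by omega
          have h3 : n + 2 ≤ Nat.fib (n + 2) + 1 := Nat.le_fib_add_one (n + 2)
          have h4 : Nat.fib (n + 2) ≤ Nat.fib (m + 1) := Nat.fib_mono h1
          omega
    obtain ⟨m, hm2, hfm, hfm1⟩ := hmex
    obtain ⟨m', rfl⟩ : ∃ m', m = m' + 2 := ⟨m - 2, by omega⟩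
    have hsplit : Nat.fib (m' + 3) = Nat.fib (m' + 1) + Nat.fib (m' + 2) :=
      Nat.fib_add_two
    have hfmpos : 0 < Nat.fib (m' + 2) := Nat.fib_pos.mpr (by omega)
    have hfm1' : n < Nat.fib (m' + 3) := hfm1
    have hn'lt : n - Nat.fib (m' + 2) < n := by omega
    have hn'small : n - Nat.fib (m' + 2) < Nat.fib (m' + 1) := by omega
    obtain ⟨S', hS'2, hS'g, hS'le, hS'sum⟩ := ih (n - Nat.fib (m' + 2)) hn'lt
    have hidx : ∀ i ∈ S', i ≤ m' := by
      intro i hiS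
      by_contra hcon
      have h5 : m' + 1 ≤ i := by omega
      have h6 : Nat.fib (m' + 1) ≤ Nat.fib i := Nat.fib_mono h5
      have := hS'le i hiS
      omega
    have hmnot : (m' + 2) ∉ S' := fun h => by have := hidx _ h; omega
    refine ⟨insert (m' + 2) S', ?_, ?_, ?_, ?_⟩
    · intro i hi
      rcases Finset.mem_insert.mp hi with rfl | hi
      · omega
      · exact hS'2 i hi
    · intro i hi
      rcases Finset.mem_insert.mp hi with rfl | hi
      · intro hcon
        rcases Finset.mem_insert.mp hcon with h | h
        · omega
        · have := hidx _ h; omega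
      · intro hcon
        rcases Finset.mem_insert.mp hcon with h | h
        · have := hidx _ hi; omega
        · exact hS'g i hi h
    · intro i hi
      rcases Finset.mem_insert.mp hi with rfl | hi
      · exact hfm
      · have := hS'le i hi; omega
    · rw [Finset.sum_insert hmnot, hS'sum]; omega

/-- In a gap-`≥ 2` set of indices `≥ 2`, any upper bound attained in the set is
at least twice the cardinality. -/
lemma max_lower : ∀ (c : ℕ) (S : Finset ℕ), S.card = c →
    (∀ i ∈ S, 2 ≤ i) → (∀ i ∈ S, i + 1 ∉ S) →
    ∀ M, M ∈ S → (∀ i ∈ S, i ≤ M) → 2 * c ≤ M := by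
  intro c
  induction c using Nat.strong_induction_on with
  | _ c ih =>
    intro S hcard h2 hg M hMS hMmax
    rcases (S.erase M).eq_empty_or_nonempty with he | hne'
    · have h1 : (S.erase M).card = S.card - 1 := Finset.card_erase_of_mem hMS
      rw [he] at h1
      simp at h1
      have h3 : 1 ≤ S.card := Finset.card_pos.mpr ⟨M, hMS⟩
      have := h2 M hMS
      omega
    · have hcard' : (S.erase M).card = c - 1 := by
        have := Finset.card_erase_of_mem hMS
        omega
      have hcpos : 1 ≤ c := by
        rw [← hcard]; exact Finset.card_pos.mpr ⟨M, hMS⟩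
      have h2' : ∀ i ∈ S.erase M, 2 ≤ i := fun i hi => h2 i (Finset.mem_of_mem_erase hi)
      have hg' : ∀ i ∈ S.erase M, i + 1 ∉ S.erase M := fun i hi hcon =>
        hg i (Finset.mem_of_mem_erase hi) (Finset.mem_of_mem_erase hcon)
      obtain ⟨M', hM'mem, hM'max⟩ : ∃ M', M' ∈ S.erase M ∧ ∀ i ∈ S.erase M, i ≤ M' :=
        ⟨(S.erase M).max' hne', (S.erase M).max'_mem hne',
          fun i hi => (S.erase M).le_max' i hi⟩
      have hIH := ih (c - 1) (by omega) (S.erase M) hcard' h2' hg' M' hM'mem hM'max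
      have hM'S : M' ∈ S := Finset.mem_of_mem_erase hM'mem
      have hM'le : M' ≤ M := hMmax M' hM'S
      have hM'ne : M' ≠ M := Finset.ne_of_mem_erase hM'mem
      have hM'1 : M' + 1 ≠ M := fun hcon => hg M' hM'S (hcon ▸ hMS)
      omega

/-- Lower bound on the sum of a Zeckendorf-type representation. -/
lemma sum_lower : ∀ (c : ℕ) (S : Finset ℕ), S.card = c →
    (∀ i ∈ S, 2 ≤ i) → (∀ i ∈ S, i + 1 ∉ S) →
    Nat.fib (2 * c + 1) ≤ (∑ i ∈ S, Nat.fib i) + 1 := by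
  intro c
  induction c using Nat.strong_induction_on with
  | _ c ih =>
    intro S hcard h2 hg
    rcases S.eq_empty_or_nonempty with rfl | hne
    · simp at hcard
      subst hcard
      simp
    obtain ⟨M, hMS, hMmax⟩ : ∃ M, M ∈ S ∧ ∀ i ∈ S, i ≤ M :=
      ⟨S.max' hne, S.max'_mem hne, fun i hi => S.le_max' i hi⟩
    have hcard' : (S.erase M).card = c - 1 := by
      have := Finset.card_erase_of_mem hMS
      omega
    have hcpos : 1 ≤ c := by rw [← hcard]; exact Finset.card_pos.mpr hne
    have h2' : ∀ i ∈ S.erase M, 2 ≤ i := fun i hi => h2 i (Finset.mem_of_mem_erase hi)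
    have hg' : ∀ i ∈ S.erase M, i + 1 ∉ S.erase M := fun i hi hcon =>
      hg i (Finset.mem_of_mem_erase hi) (Finset.mem_of_mem_erase hcon)
    have hIH := ih (c - 1) (by omega) (S.erase M) hcard' h2' hg'
    have hmax := max_lower c S hcard h2 hg M hMS hMmax
    have hfibM : Nat.fib (2 * c) ≤ Nat.fib M := Nat.fib_mono hmax
    have hsum : ∑ i ∈ S.erase M, Nat.fib i + Nat.fib M = ∑ i ∈ S, Nat.fib i :=
      Finset.sum_erase_add S _ hMS
    have hrec : Nat.fib (2 * c + 1) = Nat.fib (2 * c - 1) + Nat.fib (2 * c) := by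
      obtain ⟨d, rfl⟩ : ∃ d, c = d + 1 := ⟨c - 1, by omega⟩
      have h : Nat.fib (2 * d + 1 + 2) = Nat.fib (2 * d + 1) + Nat.fib (2 * d + 2) :=
        Nat.fib_add_two
      have e1 : 2 * (d + 1) + 1 = 2 * d + 1 + 2 := by ring
      have e2 : 2 * (d + 1) - 1 = 2 * d + 1 := by omega
      have e3 : 2 * (d + 1) = 2 * d + 2 := by ring
      rw [e1, e2, e3, h]
    have hc1 : 2 * (c - 1) + 1 = 2 * c - 1 := by omega
    rw [hc1] at hIH
    rw [hrec]
    omega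

/-- If no split move is available, any maximum of the set is small. -/
lemma max_upper : ∀ (c : ℕ) (S : Finset ℕ), S.card = c →
    (∀ j ∈ S, 4 ≤ j → (j - 1 ∈ S ∨ j - 2 ∈ S)) →
    ∀ M, M ∈ S → (∀ i ∈ S, i ≤ M) → M ≤ 2 * c + 1 := by
  intro c
  induction c using Nat.strong_induction_on with
  | _ c ih =>
    intro S hcard hns M hMS hMmax
    have hcpos : 1 ≤ c := by rw [← hcard]; exact Finset.card_pos.mpr ⟨M, hMS⟩
    by_cases hM4 : M ≤ 3
    · omega
    · have h4 : 4 ≤ M := by omega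
      have hcard' : (S.erase M).card = c - 1 := by
        have := Finset.card_erase_of_mem hMS
        omega
      have hns' : ∀ j ∈ S.erase M, 4 ≤ j → (j - 1 ∈ S.erase M ∨ j - 2 ∈ S.erase M) := by
        intro j hj hj4
        have hjS : j ∈ S := Finset.mem_of_mem_erase hj
        have hjM : j ≤ M := hMmax j hjS
        have hjne : j ≠ M := Finset.ne_of_mem_erase hj
        obtain h | h := hns j hjS hj4
        · exact Or.inl (Finset.mem_erase.mpr ⟨by omega, h⟩)
        · exact Or.inr (Finset.mem_erase.mpr ⟨by omega, h⟩)
      obtain hw | hw := hns M hMS h4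
      · have hwS' : M - 1 ∈ S.erase M := Finset.mem_erase.mpr ⟨by omega, hw⟩
        have hne' : (S.erase M).Nonempty := ⟨M - 1, hwS'⟩
        obtain ⟨M', hM'mem, hM'max⟩ : ∃ M', M' ∈ S.erase M ∧ ∀ i ∈ S.erase M, i ≤ M' :=
          ⟨(S.erase M).max' hne', (S.erase M).max'_mem hne',
            fun i hi => (S.erase M).le_max' i hi⟩
        have hIH := ih (c - 1) (by omega) (S.erase M) hcard' hns' M' hM'mem hM'max
        have := hM'max (M - 1) hwS'
        omega
      · have hwS' : M - 2 ∈ S.erase M := Finset.mem_erase.mpr ⟨by omega, hw⟩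
        have hne' : (S.erase M).Nonempty := ⟨M - 2, hwS'⟩
        obtain ⟨M', hM'mem, hM'max⟩ : ∃ M', M' ∈ S.erase M ∧ ∀ i ∈ S.erase M, i ≤ M' :=
          ⟨(S.erase M).max' hne', (S.erase M).max'_mem hne',
            fun i hi => (S.erase M).le_max' i hi⟩
        have hIH := ih (c - 1) (by omega) (S.erase M) hcard' hns' M' hM'mem hM'max
        have := hM'max (M - 2) hwS'
        omega

/-- Sum of Fibonacci numbers over a set of indices all `≤ B` is `< fib (B+2)`. -/
lemma sum_fib_lt (S : Finset ℕ) (B : ℕ) (hB : ∀ i ∈ S, i ≤ B) :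
    ∑ i ∈ S, Nat.fib i < Nat.fib (B + 2) := by
  have hsub : S ⊆ Finset.range (B + 1) := fun i hi =>
    Finset.mem_range.mpr (by have := hB i hi; omega)
  have h1 : ∑ i ∈ S, Nat.fib i ≤ ∑ i ∈ Finset.range (B + 1), Nat.fib i :=
    Finset.sum_le_sum_of_subset hsub
  have h2 : Nat.fib (B + 2) = (∑ i ∈ Finset.range (B + 1), Nat.fib i) + 1 :=
    Nat.fib_succ_eq_succ_sum (B + 1)
  omega

/-- The split move: replace `fib j` by `fib (j-1) + fib (j-2)`. -/
lemma split (S : Finset ℕ) (h2 : ∀ i ∈ S, 2 ≤ i) (j : ℕ) (hj : j ∈ S)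
    (hj4 : 4 ≤ j) (hn1 : j - 1 ∉ S) (hn2 : j - 2 ∉ S) :
    ∃ T : Finset ℕ, T.card = S.card + 1 ∧ (∀ i ∈ T, 2 ≤ i) ∧
      ∑ i ∈ T, Nat.fib i = ∑ i ∈ S, Nat.fib i := by
  obtain ⟨m, rfl⟩ : ∃ m, j = m + 4 := ⟨j - 4, by omega⟩
  have e1 : m + 4 - 1 = m + 3 := by omega
  have e2 : m + 4 - 2 = m + 2 := by omega
  rw [e1] at hn1; rw [e2] at hn2
  have h1 : (m + 2) ∉ S.erase (m + 4) := fun h => hn2 (Finset.mem_of_mem_erase h)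
  have h2' : (m + 3) ∉ insert (m + 2) (S.erase (m + 4)) := by
    intro h
    rcases Finset.mem_insert.mp h with h | h
    · omega
    · exact hn1 (Finset.mem_of_mem_erase h)
  refine ⟨insert (m + 3) (insert (m + 2) (S.erase (m + 4))), ?_, ?_, ?_⟩
  · rw [Finset.card_insert_of_notMem h2', Finset.card_insert_of_notMem h1,
      Finset.card_erase_of_mem hj]
    have : 1 ≤ S.card := Finset.card_pos.mpr ⟨_, hj⟩
    omega
  · intro i hi
    rcases Finset.mem_insert.mp hi with rfl | hi
    · omega
    rcases Finset.mem_insert.mp hi with rfl | hi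
    · omega
    · exact h2 i (Finset.mem_of_mem_erase hi)
  · rw [Finset.sum_insert h2', Finset.sum_insert h1]
    have hfib : Nat.fib (m + 4) = Nat.fib (m + 2) + Nat.fib (m + 3) := Nat.fib_add_two
    have hsum : ∑ i ∈ S.erase (m + 4), Nat.fib i + Nat.fib (m + 4)
        = ∑ i ∈ S, Nat.fib i := Finset.sum_erase_add S _ hj
    omega

end FibPrimeAux

/-- For every sufficiently large integer `k` there exists a prime that can be written as a
sum of `k` pairwise different Fibonacci numbers (consecutive Fibonacci indices allowed).
Distinct indices `≥ 2` give pairwise different Fibonacci numbers. -/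
theorem prime_sum_of_k_distinct_fibonacci :
    ∃ k₀ : ℕ, ∀ k : ℕ, k₀ ≤ k →
      ∃ p : ℕ, p.Prime ∧
        ∃ S : Finset ℕ, S.card = k ∧ (∀ i ∈ S, 2 ≤ i) ∧ p = ∑ i ∈ S, Nat.fib i := by
  use 2
  intro k hk
  have hnpos : 0 < Nat.fib (2 * k + 1) := Nat.fib_pos.mpr (by omega)
  obtain ⟨p, hp, hlt, hle⟩ :=
    Nat.exists_prime_lt_and_le_two_mul (Nat.fib (2 * k + 1)) (by omega)
  refine ⟨p, hp, ?_⟩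
  obtain ⟨S₀, h2₀, hg₀, _, hsum₀⟩ := FibPrimeAux.exists_rep p
  have hlow : Nat.fib (2 * S₀.card + 1) ≤ (∑ i ∈ S₀, Nat.fib i) + 1 :=
    FibPrimeAux.sum_lower S₀.card S₀ rfl h2₀ hg₀
  rw [hsum₀] at hlow
  -- the cardinality of the minimal representation is at most k
  have hzk : S₀.card ≤ k := by
    by_contra hcon
    have h1 : 2 * k + 3 ≤ 2 * S₀.card + 1 := by omega
    have h2 : Nat.fib (2 * k + 3) ≤ Nat.fib (2 * S₀.card + 1) := Nat.fib_mono h1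
    have h3 : Nat.fib (2 * k + 3) = Nat.fib (2 * k + 1) + Nat.fib (2 * k + 2) :=
      Nat.fib_add_two
    have h4 : Nat.fib (2 * k + 2) = Nat.fib (2 * k) + Nat.fib (2 * k + 1) :=
      Nat.fib_add_two
    have h5 : Nat.fib 4 ≤ Nat.fib (2 * k) := Nat.fib_mono (by omega)
    have h6 : Nat.fib 4 = 3 := by decide
    omega
  -- climb from the minimal representation up to exactly k summands
  have climb : ∀ t, S₀.card ≤ t → t ≤ k →
      ∃ S : Finset ℕ, S.card = t ∧ (∀ i ∈ S, 2 ≤ i) ∧ ∑ i ∈ S, Nat.fib i = p := by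
    intro t hzt
    induction t, hzt using Nat.le_induction with
    | base => exact fun _ => ⟨S₀, rfl, h2₀, hsum₀⟩
    | succ t hzt ih =>
      intro htk
      obtain ⟨S, hcard, h2S, hsumS⟩ := ih (by omega)
      by_cases hex : ∃ j ∈ S, 4 ≤ j ∧ j - 1 ∉ S ∧ j - 2 ∉ S
      · obtain ⟨j, hjS, hj4, hn1, hn2⟩ := hex
        obtain ⟨T, hTcard, hT2, hTsum⟩ := FibPrimeAux.split S h2S j hjS hj4 hn1 hn2
        exact ⟨T, by omega, hT2, by rw [hTsum, hsumS]⟩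
      · exfalso
        push_neg at hex
        have hns : ∀ j ∈ S, 4 ≤ j → (j - 1 ∈ S ∨ j - 2 ∈ S) := by
          intro j hj hj4
          by_cases h1 : j - 1 ∈ S
          · exact Or.inl h1
          · exact Or.inr (by_contra fun h2 => h2 (hex j hj hj4 h1))
        have hbound : ∑ i ∈ S, Nat.fib i < Nat.fib (2 * S.card + 3) := by
          rcases S.eq_empty_or_nonempty with rfl | hne
          · simp
          · have hmax := FibPrimeAux.max_upper S.card S rfl hns (S.max' hne)
              (S.max'_mem hne) (fun i hi => S.le_max' i hi)
            exact FibPrimeAux.sum_fib_lt S (2 * S.card + 1)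
              (fun i hi => le_trans (S.le_max' i hi) hmax)
        rw [hsumS, hcard] at hbound
        have h7 : 2 * t + 3 ≤ 2 * k + 1 := by omega
        have h8 : Nat.fib (2 * t + 3) ≤ Nat.fib (2 * k + 1) := Nat.fib_mono h7
        omega
  obtain ⟨S, hScard, hS2, hSsum⟩ := climb k hzk le_rfl
  exact ⟨S, hScard, hS2, hSsum.symm⟩
end

section
/- For every m < F_{k-3}, the Zeckendorf digits of m·F_k satisfy δ_ℓ(m F_k) = 0 for all ℓ < k − log_φ m − 1 and for all ℓ > k + log_φ m + 2. -/
/-- A valid Zeckendorf representation of `n`: digits in `{0,1}`, digits below index 2 vanish,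
no two consecutive ones, finite support, and the weighted sum equals `n`. -/
def IsZeckRep (n : ℕ) (δ : ℕ → ℕ) : Prop :=
  (∀ k, δ k ≤ 1) ∧ (∀ k < 2, δ k = 0) ∧ (∀ k, δ (k + 1) = 1 → δ k = 0) ∧
    ∃ L, (∀ k, L < k → δ k = 0) ∧ n = ∑ k ∈ Finset.range (L + 1), δ k * Nat.fib k

-- The canonical Zeckendorf digit function.
open Classical in
noncomputable def zeckDigit (n k : ℕ) : ℕ :=
  if h : ∃ δ : ℕ → ℕ, IsZeckRep n δ then h.choose k else 0

noncomputable def phi : ℝ := (1 + Real.sqrt 5) / 2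

noncomputable def psi' : ℝ := (1 - Real.sqrt 5) / 2

lemma sqrt5_sq : Real.sqrt 5 ^ 2 = 5 := Real.sq_sqrt (by norm_num)
lemma sqrt5_gt_two : 2 < Real.sqrt 5 := by
  nlinarith [Real.sq_sqrt (show (5:ℝ) ≥ 0 by norm_num), Real.sqrt_nonneg 5]
lemma sqrt5_lt_three : Real.sqrt 5 < 3 := by
  nlinarith [Real.sq_sqrt (show (5:ℝ) ≥ 0 by norm_num), Real.sqrt_nonneg 5]

lemma one_lt_phi : 1 < phi := by unfold phi; linarith [sqrt5_gt_two]
lemma phi_pos : 0 < phi := lt_trans one_pos one_lt_phi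
lemma phi_lt_two : phi < 2 := by unfold phi; linarith [sqrt5_lt_three]
lemma phi_sq : phi ^ 2 = phi + 1 := by unfold phi; nlinarith [sqrt5_sq]
lemma psi_sq : psi' ^ 2 = psi' + 1 := by unfold psi'; nlinarith [sqrt5_sq]
lemma phi_mul_psi : phi * psi' = -1 := by unfold phi psi'; nlinarith [sqrt5_sq]
lemma psi_eq : psi' = -phi⁻¹ := by
  have hp : phi ≠ 0 := ne_of_gt phi_pos
  field_simp
  linarith [phi_mul_psi]

lemma c_pos : 0 < phi⁻¹ := inv_pos.mpr phi_pos
lemma c_lt_one : phi⁻¹ < 1 := inv_lt_one_of_one_lt₀ one_lt_phi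
lemma c_mul_phi : phi⁻¹ * phi = 1 := inv_mul_cancel₀ (ne_of_gt phi_pos)
lemma one_add_c : 1 + phi⁻¹ = phi := by
  have hp : phi ≠ 0 := ne_of_gt phi_pos
  field_simp
  nlinarith [phi_sq]
lemma c_sq : phi⁻¹ ^ 2 = 1 - phi⁻¹ := by
  have hc : phi⁻¹ = phi - 1 := by linarith [one_add_c]
  rw [hc]; nlinarith [phi_sq]
lemma c_gt_half : (1:ℝ)/2 < phi⁻¹ := by
  have hc : phi⁻¹ = phi - 1 := by linarith [one_add_c]
  rw [hc]; unfold phi; linarith [sqrt5_gt_two]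

lemma fib_phi (j : ℕ) : (Nat.fib j : ℝ) * phi = Nat.fib (j+1) - psi' ^ j := by
  induction j using Nat.twoStepInduction with
  | zero => simp
  | one =>
    simp [Nat.fib]
    unfold phi psi'; ring
  | more n ih1 ih2 =>
    have h1 : (Nat.fib (n+2) : ℝ) = Nat.fib n + Nat.fib (n+1) := by
      rw [Nat.fib_add_two]; push_cast; ring
    have h3 : (Nat.fib (n+3) : ℝ) = Nat.fib (n+1) + Nat.fib (n+2) := by
      rw [show n+3 = (n+1)+2 by ring, Nat.fib_add_two]; push_cast; ring
    have hp : psi' ^ (n+2) = psi' ^ n * psi' ^ 2 := by ring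
    rw [h1, show n+2+1 = n+3 by ring, h3, add_mul, ih1, ih2, hp, psi_sq]
    ring

lemma fib_le_phi_pow (n : ℕ) : (Nat.fib (n+1) : ℝ) ≤ phi ^ n := by
  induction n using Nat.twoStepInduction with
  | zero => simp
  | one => simp; linarith [one_lt_phi]
  | more n ih1 ih2 =>
    have h3 : (Nat.fib (n+3) : ℝ) = Nat.fib (n+1) + Nat.fib (n+2) := by
      rw [show n+3 = (n+1)+2 by ring, Nat.fib_add_two]; push_cast; ring
    rw [show n+2+1 = n+3 by ring, h3]
    have : phi ^ (n+2) = phi ^ n * (phi + 1) := by rw [← phi_sq]; ring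
    rw [this]
    have : phi ^ (n+1) = phi ^ n * phi := by ring
    nlinarith [pow_pos phi_pos n]

lemma phi_pow_le_fib (n : ℕ) : phi ^ n ≤ (Nat.fib (n+2) : ℝ) := by
  induction n using Nat.twoStepInduction with
  | zero => simp
  | one =>
    simp [Nat.fib]
    linarith [phi_lt_two]
  | more n ih1 ih2 =>
    have h4 : (Nat.fib (n+4) : ℝ) = Nat.fib (n+2) + Nat.fib (n+3) := by
      rw [show n+4 = (n+2)+2 by ring, Nat.fib_add_two]; push_cast; ring
    rw [show n+2+2 = n+4 by ring, h4]
    have : phi ^ (n+2) = phi ^ n * (phi + 1) := by rw [← phi_sq]; ring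
    rw [this]
    have h1 : phi ^ (n+1) = phi ^ n * phi := by ring
    nlinarith [pow_pos phi_pos n]



lemma zeck_digit_fib_le {n : ℕ} {δ : ℕ → ℕ} (h : IsZeckRep n δ) {ℓ : ℕ} (hℓ : δ ℓ = 1) :
    Nat.fib ℓ ≤ n := by
  obtain ⟨h1, h2, h3, L, hL, hsum⟩ := h
  by_cases hc : ℓ < L + 1
  · calc Nat.fib ℓ = δ ℓ * Nat.fib ℓ := by rw [hℓ]; ring
    _ ≤ ∑ k ∈ Finset.range (L+1), δ k * Nat.fib k :=
        Finset.single_le_sum (f := fun k => δ k * Nat.fib k)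
          (fun i _ => Nat.zero_le _) (Finset.mem_range.mpr hc)
    _ = n := hsum.symm
  · have := hL ℓ (by omega); omega

lemma lt_fib_add_two (n : ℕ) : n < Nat.fib (n+2) := by
  induction n with
  | zero => simp
  | succ n ih =>
    have h1 := Nat.fib_pos.mpr (show 0 < n+1 by omega)
    have h2 : Nat.fib (n+3) = Nat.fib (n+1) + Nat.fib (n+2) := by
      rw [show n+3 = (n+1)+2 by ring, Nat.fib_add_two]
    have : n+1+2 = n+3 := by ring
    rw [this, h2]; omega

lemma zeck_exists (n : ℕ) : ∃ δ, IsZeckRep n δ := by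
  induction n using Nat.strong_induction_on with
  | _ n ih =>
    rcases Nat.eq_zero_or_pos n with h0 | hpos
    · refine ⟨fun _ => 0, fun _ => Nat.zero_le 1, fun _ _ => rfl, fun _ _ => rfl, 0,
        fun _ _ => rfl, by simp [h0]⟩
    · have hfib2 : Nat.fib 2 ≤ n := by simp; omega
      set j := Nat.findGreatest (fun j => Nat.fib j ≤ n) (n+2) with hj
      have hj2 : 2 ≤ j := Nat.le_findGreatest (by omega) hfib2
      have hjle : Nat.fib j ≤ n :=
        Nat.findGreatest_spec (P := fun j => Nat.fib j ≤ n) (m := 2) (n := n+2) (by omega) hfib2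
      have hjsucc : n < Nat.fib (j+1) := by
        by_contra hcon
        push_neg at hcon
        have hb : j + 1 ≤ n + 2 := by
          by_contra hb
          push_neg at hb
          have h5 : Nat.fib (n+2) ≤ Nat.fib (j+1) := Nat.fib_mono (by omega)
          have := lt_fib_add_two n
          omega
        exact Nat.findGreatest_is_greatest (Nat.lt_succ_self j) hb hcon
      have hfe : Nat.fib (j+1) = Nat.fib (j-1) + Nat.fib j := by
        rw [show j+1 = (j-1)+2 by omega, Nat.fib_add_two, show j-1+1 = j by omega]
      have hlt : n - Nat.fib j < n := by
        have := Nat.fib_pos.mpr (show 0 < j by omega); omega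
      obtain ⟨δ', hδ'⟩ := ih (n - Nat.fib j) hlt
      obtain ⟨d1, d2, d3, L', hL', hsum'⟩ := hδ'
      have hup : ∀ i, j - 1 ≤ i → δ' i = 0 := by
        intro i hi
        by_contra hne
        have h1 : δ' i = 1 := by have := d1 i; omega
        have h4 := zeck_digit_fib_le ⟨d1, d2, d3, L', hL', hsum'⟩ h1
        have h5 : Nat.fib (j-1) ≤ Nat.fib i := Nat.fib_mono hi
        omega
      refine ⟨fun i => if i = j then 1 else δ' i, ?_, ?_, ?_, j, ?_, ?_⟩
      · intro i; by_cases h : i = j <;> simp [h, d1 i]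
      · intro i hi
        have : i ≠ j := by omega
        simp [this, d2 i hi]
      · intro i hi
        dsimp only at hi ⊢
        by_cases h : i + 1 = j
        · rw [if_neg (show i ≠ j by omega)]
          exact hup i (by omega)
        · rw [if_neg h] at hi
          have hlt2 : i + 1 < j - 1 := by
            by_contra hc
            push_neg at hc
            have := hup (i+1) (by omega)
            omega
          rw [if_neg (show i ≠ j by omega)]
          exact d3 i hi
      · intro i hi
        dsimp only
        rw [if_neg (show i ≠ j by omega)]
        exact hup i (by omega)
      · dsimp only
        rw [Finset.sum_range_succ, if_pos rfl, one_mul]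
        have hcongr : ∑ i ∈ Finset.range j, (if i = j then 1 else δ' i) * Nat.fib i
            = ∑ i ∈ Finset.range j, δ' i * Nat.fib i := by
          apply Finset.sum_congr rfl
          intro i hi
          rw [if_neg (by simp at hi; omega)]
        rw [hcongr]
        have hsum2 : ∑ i ∈ Finset.range j, δ' i * Nat.fib i = n - Nat.fib j := by
          rcases le_total (L' + 1) j with hle | hle
          · rw [← Finset.sum_subset (Finset.range_subset_range.mpr hle)
              (fun x _ hx => by simp at hx; rw [hL' x (by omega)]; ring)]
            exact hsum'.symm
          · rw [Finset.sum_subset (Finset.range_subset_range.mpr hle)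
              (fun x _ hx => by simp at hx; rw [hup x (by omega)]; ring)]
            exact hsum'.symm
        omega


lemma tail_bound (δ : ℕ → ℕ) (hδ : ∀ i, δ i ≤ 1) (N : ℕ) :
    ∀ d a, N ≤ a + d →
      (Even a → -(phi⁻¹^a) ≤ (∑ j ∈ Finset.Ico a N, (δ j : ℝ) * psi' ^ j) ∧
          (∑ j ∈ Finset.Ico a N, (δ j : ℝ) * psi' ^ j) ≤ phi⁻¹^a * phi) ∧
      (¬ Even a → -(phi⁻¹^a * phi) ≤ (∑ j ∈ Finset.Ico a N, (δ j : ℝ) * psi' ^ j) ∧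
          (∑ j ∈ Finset.Ico a N, (δ j : ℝ) * psi' ^ j) ≤ phi⁻¹^a) := by
  intro d
  induction d with
  | zero =>
    intro a ha
    rw [Finset.Ico_eq_empty (by omega), Finset.sum_empty]
    have h1 : (0:ℝ) < phi⁻¹^a := pow_pos c_pos a
    have h2 : (0:ℝ) < phi⁻¹^a*phi := mul_pos h1 phi_pos
    exact ⟨fun _ => ⟨by linarith, by linarith⟩, fun _ => ⟨by linarith, by linarith⟩⟩
  | succ d ihd =>
    intro a ha
    by_cases hN : N ≤ a
    · rw [Finset.Ico_eq_empty (by omega), Finset.sum_empty]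
      have h1 : (0:ℝ) < phi⁻¹^a := pow_pos c_pos a
      have h2 : (0:ℝ) < phi⁻¹^a*phi := mul_pos h1 phi_pos
      exact ⟨fun _ => ⟨by linarith, by linarith⟩, fun _ => ⟨by linarith, by linarith⟩⟩
    · push_neg at hN
      rw [Finset.sum_eq_sum_Ico_succ_bot hN]
      obtain ⟨ih1, ih2⟩ := ihd (a+1) (by omega)
      have hterm0 : (0:ℝ) ≤ (δ a : ℝ) := Nat.cast_nonneg _
      have hterm1 : (δ a : ℝ) ≤ 1 := by exact_mod_cast hδ a
      have hpa : (0:ℝ) < phi⁻¹^a := pow_pos c_pos a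
      have hkey : phi⁻¹ ^ (a+1) * phi = phi⁻¹ ^ a := by
        rw [pow_succ, mul_assoc, c_mul_phi, mul_one]
      have hsucc : phi⁻¹ ^ (a+1) = phi⁻¹^a * phi⁻¹ := pow_succ _ _
      have hkey2 : phi⁻¹^a * (1 + phi⁻¹) = phi⁻¹^a * phi := by rw [one_add_c]
      constructor
      · intro hEa
        have hpow : psi' ^ a = phi⁻¹ ^ a := by rw [psi_eq, Even.neg_pow hEa]
        have hodd : ¬ Even (a+1) := by simp [Nat.even_add_one, hEa]
        obtain ⟨hl, hu⟩ := ih2 hodd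
        rw [hpow]
        constructor
        · nlinarith
        · nlinarith
      · intro hEa
        have hOa : Odd a := Nat.odd_iff.mpr (Nat.not_even_iff.mp hEa)
        have hpow : psi' ^ a = -(phi⁻¹ ^ a) := by rw [psi_eq, Odd.neg_pow hOa]
        have heven : Even (a+1) := Nat.even_add_one.mpr hEa
        obtain ⟨hl, hu⟩ := ih1 heven
        rw [hpow]
        constructor
        · nlinarith
        · nlinarith



lemma pow_eq_rpow_neg (n : ℕ) : phi⁻¹ ^ n = phi ^ (-(n:ℝ)) := by
  rw [inv_pow, ← Real.rpow_natCast phi n, ← Real.rpow_neg phi_pos.le]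

set_option maxHeartbeats 1000000 in
lemma main_digit (m k : ℕ) (hm : 0 < m) (hmk : m < Nat.fib (k - 3)) (δ : ℕ → ℕ)
    (h : IsZeckRep (m * Nat.fib k) δ) (ℓ : ℕ)
    (hside : (ℓ : ℝ) < (k : ℝ) - Real.logb phi m - 1 ∨
      (k : ℝ) + Real.logb phi m + 2 < (ℓ : ℝ)) :
    δ ℓ = 0 := by
  obtain ⟨d1, d2, d3, L, hL, hsum⟩ := h
  by_contra hne
  have hδℓ : δ ℓ = 1 := by have := d1 ℓ; omega
  have hk6 : 6 ≤ k := by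
    by_contra hk
    push_neg at hk
    have h1 : Nat.fib (k-3) ≤ Nat.fib 2 := Nat.fib_mono (by omega)
    have h2 : Nat.fib 2 = 1 := rfl
    omega
  have hm1 : (1:ℝ) ≤ m := by exact_mod_cast hm
  have hm0 : (0:ℝ) < m := by linarith
  have hlogb0 : 0 ≤ Real.logb phi m := Real.logb_nonneg one_lt_phi hm1
  rcases hside with hlow | hhigh
  · -- LOW SIDE
    have hmlt : (m:ℝ) < phi ^ ((k:ℝ) - ℓ - 1) := by
      rw [← Real.logb_lt_iff_lt_rpow one_lt_phi hm0]
      linarith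
    have hex : ∃ i, δ i = 1 := ⟨ℓ, hδℓ⟩
    classical
    set ℓ0 := Nat.find hex with hℓ0def
    have hδℓ0 : δ ℓ0 = 1 := Nat.find_spec hex
    have hmin : ∀ i < ℓ0, δ i = 0 := fun i hi => by
      have := Nat.find_min hex hi; have := d1 i; omega
    have hℓ0le : ℓ0 ≤ ℓ := Nat.find_min' hex hδℓ
    set N := L + 1 with hNdef
    set S := ∑ j ∈ Finset.range N, (δ j : ℝ) * psi' ^ j with hSdef
    set M := ∑ j ∈ Finset.range N, δ j * Nat.fib (j+1) with hMdef
    have hcast : (m : ℝ) * (Nat.fib k : ℝ)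
        = ∑ j ∈ Finset.range N, (δ j : ℝ) * (Nat.fib j : ℝ) := by
      exact_mod_cast hsum
    have h_ident : (M : ℝ) - S = (m:ℝ) * Nat.fib (k+1) - (m:ℝ) * psi' ^ k := by
      have h1 : (M : ℝ) - S = ((m:ℝ) * (Nat.fib k : ℝ)) * phi := by
        rw [hcast, Finset.sum_mul, hSdef, hMdef]
        push_cast
        rw [← Finset.sum_sub_distrib]
        apply Finset.sum_congr rfl
        intro j _
        rw [mul_assoc, fib_phi j]
        ring
      rw [h1, mul_assoc, fib_phi k]
      ring
    -- bounds on S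
    have hSIco : S = ∑ j ∈ Finset.Ico 2 N, (δ j : ℝ) * psi' ^ j := by
      rw [hSdef, Finset.range_eq_Ico]
      exact (Finset.sum_subset (Finset.Ico_subset_Ico (Nat.zero_le 2) le_rfl)
        (fun x hx hx2 => by
          simp only [Finset.mem_Ico] at hx hx2
          rw [d2 x (by omega)]
          simp)).symm
    have hc2phi : phi⁻¹ ^ 2 * phi = phi⁻¹ := by
      rw [pow_two, mul_assoc, c_mul_phi, mul_one]
    obtain ⟨hS2l, hS2u⟩ := ((tail_bound δ d1 N N 2 (by omega)).1 (by decide))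
    rw [← hSIco] at hS2l hS2u
    rw [hc2phi] at hS2u
    have hc2pos : (0:ℝ) < phi⁻¹ ^ 2 := pow_pos c_pos 2
    -- m * c^k < c^4
    have hmphi : (m:ℝ) < phi ^ (k-4) := by
      have h1 : (m:ℝ) < (Nat.fib (k-3) : ℝ) := by exact_mod_cast hmk
      have h2 := fib_le_phi_pow (k-4)
      rw [show k-4+1 = k-3 by omega] at h2
      linarith
    have hck_pos : (0:ℝ) < phi⁻¹ ^ k := pow_pos c_pos k
    have hq : phi ^ (k-4) * phi⁻¹ ^ k = phi⁻¹ ^ 4 := by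
      have hsplit : phi ^ k = phi ^ (k-4) * phi ^ 4 := by
        rw [← pow_add]; congr 1; omega
      rw [inv_pow, inv_pow, hsplit, mul_inv, ← mul_assoc,
        mul_inv_cancel₀ (pow_ne_zero _ (ne_of_gt phi_pos)), one_mul]
    have hmck : (m:ℝ) * phi⁻¹ ^ k < phi⁻¹ ^ 4 := by
      rw [← hq]
      exact mul_lt_mul_of_pos_right hmphi hck_pos
    have hc4 : phi⁻¹ ^ 4 = (1 - phi⁻¹)^2 := by rw [← c_sq]; ring
    have hsmall : phi⁻¹ + phi⁻¹ ^ 4 < 1 := by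
      rw [hc4]; nlinarith [c_gt_half, c_lt_one]
    -- |psi'^k| ≤ c^k
    have hpsik_u : psi' ^ k ≤ phi⁻¹ ^ k := by
      rcases Nat.even_or_odd k with he | ho
      · rw [psi_eq, Even.neg_pow he]
      · rw [psi_eq, Odd.neg_pow ho]; linarith
    have hpsik_l : -(phi⁻¹ ^ k) ≤ psi' ^ k := by
      rcases Nat.even_or_odd k with he | ho
      · rw [psi_eq, Even.neg_pow he]; linarith
      · rw [psi_eq, Odd.neg_pow ho]
    have hmpsik_u : (m:ℝ) * psi' ^ k ≤ (m:ℝ) * phi⁻¹ ^ k :=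
      mul_le_mul_of_nonneg_left hpsik_u (le_of_lt hm0)
    have hmpsik_l : -((m:ℝ) * phi⁻¹ ^ k) ≤ (m:ℝ) * psi' ^ k := by
      have := mul_le_mul_of_nonneg_left hpsik_l (le_of_lt hm0)
      linarith [this]
    -- M = m * fib (k+1)
    have hMA : M = m * Nat.fib (k+1) := by
      have hub : (M:ℝ) < (m * Nat.fib (k+1) : ℕ) + 1 := by
        push_cast
        linarith [h_ident, hS2u, hmpsik_l, hmck, hsmall]
      have hlb : ((m * Nat.fib (k+1) : ℕ) : ℝ) < (M:ℝ) + 1 := by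
        push_cast
        linarith [h_ident, hS2l, hmpsik_u, hmck, hsmall, hc2pos, c_lt_one, c_pos]
      have h1 : M < m * Nat.fib (k+1) + 1 := by exact_mod_cast hub
      have h2 : m * Nat.fib (k+1) < M + 1 := by exact_mod_cast hlb
      omega
    have hSeq : S = (m:ℝ) * psi' ^ k := by
      rw [hMA] at h_ident
      push_cast at h_ident
      linarith
    -- lower bound on S via ℓ0
    have hℓ0N : ℓ0 < N := by
      by_contra hc
      push_neg at hc
      have := hL ℓ0 (by omega)
      omega
    have hSℓ0 : S = ∑ j ∈ Finset.Ico ℓ0 N, (δ j : ℝ) * psi' ^ j := by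
      rw [hSdef, Finset.range_eq_Ico]
      exact (Finset.sum_subset (Finset.Ico_subset_Ico (Nat.zero_le ℓ0) le_rfl)
        (fun x hx hx2 => by
          simp only [Finset.mem_Ico] at hx hx2
          rw [hmin x (by omega)]
          simp)).symm
    have hδℓ01 : δ (ℓ0 + 1) = 0 := by
      by_cases hcc : δ (ℓ0+1) = 1
      · have := d3 ℓ0 hcc; omega
      · have := d1 (ℓ0+1); omega
    have hstrip : ∑ j ∈ Finset.Ico (ℓ0+1) N, (δ j : ℝ) * psi' ^ j
        = ∑ j ∈ Finset.Ico (ℓ0+2) N, (δ j : ℝ) * psi' ^ j := by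
      exact (Finset.sum_subset (Finset.Ico_subset_Ico (by omega) le_rfl)
        (fun x hx hx2 => by
          simp only [Finset.mem_Ico] at hx hx2
          rw [show x = ℓ0 + 1 by omega, hδℓ01]
          simp)).symm
    have hSsplit : S = psi' ^ ℓ0 + ∑ j ∈ Finset.Ico (ℓ0+2) N, (δ j : ℝ) * psi' ^ j := by
      rw [hSℓ0, Finset.sum_eq_sum_Ico_succ_bot hℓ0N, hδℓ0, hstrip]
      push_cast
      ring
    have hone_sub : 1 - phi⁻¹ ^ 2 = phi⁻¹ := by rw [c_sq]; ring
    have hpowsucc : phi⁻¹ ^ (ℓ0+2) = phi⁻¹ ^ ℓ0 * phi⁻¹ ^ 2 := by rw [pow_add]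
    have hpl0 : (0:ℝ) < phi⁻¹ ^ ℓ0 := pow_pos c_pos ℓ0
    have hkey : phi⁻¹ ^ (ℓ0+1) ≤ (m:ℝ) * phi⁻¹ ^ k := by
      have hsucc1 : phi⁻¹ ^ (ℓ0+1) = phi⁻¹ ^ ℓ0 * phi⁻¹ := by rw [pow_succ]
      rcases Nat.even_or_odd ℓ0 with he | ho
      · have hEa2 : Even (ℓ0 + 2) := by
          rcases he with ⟨t, ht⟩; exact ⟨t+1, by omega⟩
        obtain ⟨hl, _⟩ := ((tail_bound δ d1 N N (ℓ0+2) (by omega)).1 hEa2)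
        have hpow : psi' ^ ℓ0 = phi⁻¹ ^ ℓ0 := by rw [psi_eq, Even.neg_pow he]
        have hSge : phi⁻¹ ^ (ℓ0+1) ≤ S := by
          rw [hSsplit, hpow]
          nlinarith
        rw [hSeq] at hSge
        linarith [hmpsik_u]
      · have hOa2 : ¬ Even (ℓ0 + 2) := by
          simp [Nat.even_add_one, Nat.even_add] at *
          simpa using (Nat.not_even_iff_odd.mpr ho)
        obtain ⟨_, hu⟩ := ((tail_bound δ d1 N N (ℓ0+2) (by omega)).2 hOa2)
        have hpow : psi' ^ ℓ0 = -(phi⁻¹ ^ ℓ0) := by rw [psi_eq, Odd.neg_pow ho]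
        have hSle : S ≤ -(phi⁻¹ ^ (ℓ0+1)) := by
          rw [hSsplit, hpow]
          nlinarith
        rw [hSeq] at hSle
        linarith [hmpsik_l]
    -- conclude
    have hmono : phi⁻¹ ^ (ℓ+1) ≤ phi⁻¹ ^ (ℓ0+1) :=
      pow_le_pow_of_le_one c_pos.le c_lt_one.le (by omega)
    have hfinal : phi ^ (-((ℓ:ℝ)+1)) < phi ^ ((k:ℝ) - ℓ - 1 + -(k:ℝ)) := by
      rw [Real.rpow_add phi_pos]
      calc phi ^ (-((ℓ:ℝ)+1)) = phi⁻¹ ^ (ℓ+1) := by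
            rw [pow_eq_rpow_neg]; push_cast; ring_nf
        _ ≤ (m:ℝ) * phi⁻¹ ^ k := le_trans hmono hkey
        _ < phi ^ ((k:ℝ)-ℓ-1) * phi⁻¹ ^ k := mul_lt_mul_of_pos_right hmlt hck_pos
        _ = phi ^ ((k:ℝ)-ℓ-1) * phi ^ (-(k:ℝ)) := by rw [pow_eq_rpow_neg]
    have := (Real.rpow_lt_rpow_left_iff one_lt_phi).mp hfinal
    linarith
  · -- HIGH SIDE
    have hfle : Nat.fib ℓ ≤ m * Nat.fib k :=
      zeck_digit_fib_le ⟨d1, d2, d3, L, hL, hsum⟩ hδℓ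
    have hℓk : k + 3 ≤ ℓ := by
      have h1 : (k:ℝ) + 2 < ℓ := by linarith
      have h2 : k + 2 < ℓ := by exact_mod_cast h1
      omega
    have h1 : phi ^ (ℓ-2) ≤ (Nat.fib ℓ : ℝ) := by
      have := phi_pow_le_fib (ℓ-2)
      rwa [show ℓ-2+2 = ℓ by omega] at this
    have h2 : (Nat.fib k : ℝ) ≤ phi ^ (k-1) := by
      have := fib_le_phi_pow (k-1)
      rwa [show k-1+1 = k by omega] at this
    have h3 : (m : ℝ) < phi ^ ((ℓ:ℝ) - k - 2) := by
      rw [← Real.logb_lt_iff_lt_rpow one_lt_phi hm0]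
      linarith
    have hcast : (Nat.fib ℓ : ℝ) ≤ (m:ℝ) * (Nat.fib k : ℝ) := by exact_mod_cast hfle
    have hfibk0 : (0:ℝ) ≤ (Nat.fib k : ℝ) := Nat.cast_nonneg _
    have h4 : phi ^ (ℓ-2) < phi ^ ((ℓ:ℝ)-k-2) * phi ^ (k-1) := by
      calc phi ^ (ℓ-2) ≤ (m:ℝ) * (Nat.fib k:ℝ) := le_trans h1 hcast
        _ ≤ (m:ℝ) * phi ^ (k-1) := mul_le_mul_of_nonneg_left h2 (le_of_lt hm0)
        _ < phi ^ ((ℓ:ℝ)-k-2) * phi ^ (k-1) :=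
            mul_lt_mul_of_pos_right h3 (pow_pos phi_pos _)
    have e1 : phi ^ (ℓ-2) = phi ^ ((ℓ:ℝ) - 2) := by
      rw [← Real.rpow_natCast phi (ℓ-2)]
      congr 1
      push_cast [Nat.cast_sub (show 2 ≤ ℓ by omega)]
      ring
    have e2 : (phi : ℝ) ^ (k-1) = phi ^ ((k:ℝ) - 1) := by
      rw [← Real.rpow_natCast phi (k-1)]
      congr 1
      push_cast [Nat.cast_sub (show 1 ≤ k by omega)]
      ring
    rw [e1, e2, ← Real.rpow_add phi_pos] at h4
    have := (Real.rpow_lt_rpow_left_iff one_lt_phi).mp h4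
    linarith


/-- For `0 < m < F_(k-3)`, the Zeckendorf digits of `m·F_k` vanish at all indices
`ℓ < k - log_φ m - 1` and all indices `ℓ > k + log_φ m + 2`. -/
theorem zeck_digits_mul_fib (m k : ℕ) (hm : 0 < m) (hmk : m < Nat.fib (k - 3)) :
    ∀ ℓ : ℕ, ((ℓ : ℝ) < (k : ℝ) - Real.logb phi m - 1 ∨
        (k : ℝ) + Real.logb phi m + 2 < (ℓ : ℝ)) →
      zeckDigit (m * Nat.fib k) ℓ = 0 := by
  intro ℓ hside
  unfold zeckDigit
  rw [dif_pos (zeck_exists (m * Nat.fib k))]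
  exact main_digit m k hm hmk _ (zeck_exists (m * Nat.fib k)).choose_spec ℓ hside
end

section
/- For any real numbers x_1, ..., x_{k−1}: k − |1 + e(x_1) + ... + e(x_{k−1})| ≥ max_{1≤i<k} ‖x_i‖², where e(x) = exp(2πi x) and ‖x‖ is the distance from x to the nearest integer. -/
lemma aux_angle (x : ℝ) :
    ‖1 + Complex.exp (2 * Real.pi * Complex.I * (x : ℂ))‖ ≤
      2 - |x - round x| ^ 2 := by
  set t : ℝ := x - round x with ht
  have htle : |t| ≤ 1 / 2 := abs_sub_round x
  have hcos1 : Real.cos (2 * Real.pi * x) = Real.cos (2 * Real.pi * t) := by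
    have : 2 * Real.pi * x = 2 * Real.pi * t + (round x : ℤ) * (2 * Real.pi) := by
      rw [ht]; ring
    rw [this, Real.cos_add_int_mul_two_pi]
  have hsin : 2 * |t| ≤ Real.sin (Real.pi * |t|) := by
    have h1 := Real.mul_le_sin (x := Real.pi * |t|) (by positivity)
      (by nlinarith [Real.pi_pos, abs_nonneg t])
    have h2 : 2 / Real.pi * (Real.pi * |t|) = 2 * |t| := by
      field_simp
    linarith
  have hsinsq : Real.sin (Real.pi * t) ^ 2 = Real.sin (Real.pi * |t|) ^ 2 := by
    rcases abs_cases t with ⟨h, _⟩ | ⟨h, _⟩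
    · rw [h]
    · rw [h]; rw [show Real.pi * -t = -(Real.pi * t) by ring, Real.sin_neg]; ring
  have hcos : Real.cos (2 * Real.pi * x) ≤ 1 - 8 * t ^ 2 := by
    rw [hcos1, show 2 * Real.pi * t = 2 * (Real.pi * t) by ring, Real.cos_two_mul,
      show (2 : ℝ) * Real.cos (Real.pi * t) ^ 2 - 1
        = 1 - 2 * Real.sin (Real.pi * t) ^ 2 by
          have := Real.sin_sq_add_cos_sq (Real.pi * t); linarith]
    have h4 : (2 * |t|) ^ 2 ≤ Real.sin (Real.pi * |t|) ^ 2 := by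
      have h0 : 0 ≤ 2 * |t| := by positivity
      nlinarith
    rw [← hsinsq] at h4
    nlinarith [sq_abs t]
  have hexp : Complex.exp (2 * Real.pi * Complex.I * (x : ℂ))
      = (Real.cos (2 * Real.pi * x) : ℂ) + (Real.sin (2 * Real.pi * x) : ℂ) * Complex.I := by
    rw [show (2 : ℂ) * Real.pi * Complex.I * (x : ℂ)
        = ((2 * Real.pi * x : ℝ) : ℂ) * Complex.I by push_cast; ring,
      Complex.exp_mul_I, ← Complex.ofReal_cos, ← Complex.ofReal_sin]
  have hsq : (‖1 + Complex.exp (2 * Real.pi * Complex.I * (x : ℂ))‖) ^ 2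
      = 2 + 2 * Real.cos (2 * Real.pi * x) := by
    rw [Complex.sq_norm, hexp, Complex.normSq_apply]
    simp only [Complex.add_re, Complex.add_im, Complex.one_re, Complex.one_im,
      Complex.mul_re, Complex.mul_im, Complex.I_re, Complex.I_im,
      Complex.ofReal_re, Complex.ofReal_im]
    nlinarith [Real.sin_sq_add_cos_sq (2 * Real.pi * x)]
  have habs := norm_nonneg (1 + Complex.exp (2 * Real.pi * Complex.I * (x : ℂ)))
  have hta : |t| ^ 2 = t ^ 2 := sq_abs t
  have ht2 : t ^ 2 ≤ 1 / 4 := by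
    have h := mul_le_mul htle htle (abs_nonneg t) (by norm_num : (0:ℝ) ≤ 1/2)
    rw [abs_mul_abs_self] at h
    calc t ^ 2 = t * t := sq t
      _ ≤ 1 / 2 * (1 / 2) := h
      _ = 1 / 4 := by norm_num
  nlinarith

/-- For real numbers `x₁, …, x_(k−1)`:
`k − |1 + e(x₁) + ⋯ + e(x_(k−1))| ≥ max ‖x i‖²`, where `e(x) = exp(2πix)`
and `‖x‖` is the distance from `x` to the nearest integer. -/
theorem angle_estimate (k : ℕ) (hk : 2 ≤ k) (x : ℕ → ℝ) :
    (Finset.Icc 1 (k - 1)).sup' (Finset.nonempty_Icc.mpr (by omega))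
        (fun i => |x i - round (x i)| ^ 2) ≤
      (k : ℝ) - ‖1 + ∑ j ∈ Finset.Icc 1 (k - 1),
        Complex.exp (2 * Real.pi * Complex.I * (x j : ℂ))‖ := by
  apply Finset.sup'_le
  intro i hi
  set e : ℕ → ℂ := fun j => Complex.exp (2 * Real.pi * Complex.I * (x j : ℂ)) with he
  have hsplit : (1 : ℂ) + ∑ j ∈ Finset.Icc 1 (k - 1), e j
      = (1 + e i) + ∑ j ∈ (Finset.Icc 1 (k - 1)).erase i, e j := by
    rw [← Finset.add_sum_erase _ e hi]; ring
  have habs1 : ‖1 + e i‖ ≤ 2 - |x i - round (x i)| ^ 2 := aux_angle (x i)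
  have habs2 : ‖∑ j ∈ (Finset.Icc 1 (k - 1)).erase i, e j‖ ≤ (k : ℝ) - 2 := by
    calc ‖∑ j ∈ (Finset.Icc 1 (k - 1)).erase i, e j‖
        ≤ ∑ j ∈ (Finset.Icc 1 (k - 1)).erase i, ‖e j‖ :=
          norm_sum_le _ _
      _ = ∑ j ∈ (Finset.Icc 1 (k - 1)).erase i, 1 := by
          apply Finset.sum_congr rfl
          intro j _
          rw [he]
          simp only
          rw [show (2 : ℂ) * Real.pi * Complex.I * (x j : ℂ)
            = ((2 * Real.pi * x j : ℝ) : ℂ) * Complex.I by push_cast; ring]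
          simp [Complex.norm_exp]
      _ = ((Finset.Icc 1 (k - 1)).erase i).card := by simp
      _ = (k : ℝ) - 2 := by
          rw [Finset.card_erase_of_mem hi, Nat.card_Icc]
          have h1 : k - 1 + 1 - 1 - 1 = k - 2 := by omega
          rw [h1]
          push_cast [Nat.cast_sub hk]
          ring
  have htotal : ‖1 + ∑ j ∈ Finset.Icc 1 (k - 1), e j‖
      ≤ (2 - |x i - round (x i)| ^ 2) + ((k : ℝ) - 2) := by
    rw [hsplit]
    exact le_trans (norm_add_le _ _) (add_le_add habs1 habs2)
  linarith
end

section
/- For the Markov chain probability generating function: E[v^{S_n}] = a(v)·λ₁(v)^n + b(v)·λ₂(v)^n where λ₁(v) = (1 + √(1+4v))/(2φ), λ₂(v) = (1 − √(1+4v))/(2φ), a(v) = ((φ²+v)/(φ²+1) − λ₂(v))/(λ₁(v) − λ₂(v)), and b(v) = ((φ²+v)/(φ²+1) − λ₁(v))/(λ₂(v) − λ₁(v)). -/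
/-- Initial (stationary) distribution of the Markov chain `(Z k)` on `{0,1}`. -/
noncomputable def zInit : Fin 2 → ℝ := fun b =>
  if b = 0 then phi ^ 2 / (phi ^ 2 + 1) else 1 / (phi ^ 2 + 1)

/-- Transition probabilities of the Markov chain `(Z k)` on `{0,1}`. -/
noncomputable def zTrans : Fin 2 → Fin 2 → ℝ := fun a b =>
  if a = 0 then (if b = 0 then 1 / phi else 1 / phi ^ 2)
  else (if b = 0 then 1 else 0)

/-- The probability of the path `(Z 0, …, Z n) = (z 0, …, z n)` of the Markov chain. -/
noncomputable def pathProb (n : ℕ) (z : Fin (n + 1) → Fin 2) : ℝ :=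
  zInit (z 0) * ∏ i : Fin n, zTrans (z i.castSucc) (z i.succ)

/-- The value `S n = Z 1 + ⋯ + Z n` along a path. -/
def pathSum (n : ℕ) (z : Fin (n + 1) → Fin 2) : ℕ := ∑ i : Fin n, (z i.succ : ℕ)

noncomputable def lam1 (v : ℝ) : ℝ := (1 + Real.sqrt (1 + 4 * v)) / (2 * phi)

noncomputable def lam2 (v : ℝ) : ℝ := (1 - Real.sqrt (1 + 4 * v)) / (2 * phi)

noncomputable def aCoef (v : ℝ) : ℝ :=
  ((phi ^ 2 + v) / (phi ^ 2 + 1) - lam2 v) / (lam1 v - lam2 v)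

noncomputable def bCoef (v : ℝ) : ℝ :=
  ((phi ^ 2 + v) / (phi ^ 2 + 1) - lam1 v) / (lam2 v - lam1 v)

/-! ### Auxiliary definitions and lemmas -/

noncomputable def mStep (v : ℝ) (u : Fin 2 → ℝ) : Fin 2 → ℝ :=
  fun b => ∑ a, u a * zTrans a b * v ^ (b : ℕ)

noncomputable def mF (v : ℝ) (u : Fin 2 → ℝ) (n : ℕ) : ℝ :=
  ∑ z : Fin (n + 1) → Fin 2,
    u (z 0) * ∏ i : Fin n, (zTrans (z i.castSucc) (z i.succ) * v ^ (z i.succ : ℕ))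

lemma mF_zero (v : ℝ) (u : Fin 2 → ℝ) : mF v u 0 = u 0 + u 1 := by
  rw [mF]
  rw [← Equiv.sum_comp (Equiv.funUnique (Fin 1) (Fin 2)).symm]
  simp [Fin.sum_univ_two]

lemma mF_succ (v : ℝ) (u : Fin 2 → ℝ) (n : ℕ) : mF v u (n + 1) = mF v (mStep v u) n := by
  rw [mF, mF]
  rw [← Equiv.sum_comp (Fin.consEquiv (fun _ : Fin (n+2) => Fin 2))]
  rw [Fintype.sum_prod_type]
  rw [Finset.sum_comm]
  refine Finset.sum_congr rfl (fun z _ => ?_)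
  rw [mStep, Finset.sum_mul]
  refine Finset.sum_congr rfl (fun a _ => ?_)
  simp only [Fin.consEquiv_apply, Fin.prod_univ_succ, Fin.cons_zero, Fin.cons_succ,
    Fin.castSucc_zero, Fin.succ_zero_eq_one, ← Fin.succ_castSucc]
  ring

lemma mF_iter (v : ℝ) (u : Fin 2 → ℝ) (n : ℕ) :
    mF v u n = (mStep v)^[n] u 0 + (mStep v)^[n] u 1 := by
  induction n generalizing u with
  | zero => simpa using mF_zero v u
  | succ n ih => rw [mF_succ, ih, Function.iterate_succ_apply]

lemma path_rewrite (v : ℝ) (n : ℕ) (z : Fin (n+1) → Fin 2) :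
    (zInit (z 0) * ∏ i : Fin n, zTrans (z i.castSucc) (z i.succ)) * v ^ (∑ i : Fin n, (z i.succ : ℕ)) =
    zInit (z 0) * ∏ i : Fin n, (zTrans (z i.castSucc) (z i.succ) * v ^ (z i.succ : ℕ)) := by
  rw [← Finset.prod_pow_eq_pow_sum, Finset.prod_mul_distrib, mul_assoc]

lemma sqrt_pos' (v : ℝ) (hv : 0 < v) : 0 < Real.sqrt (1 + 4 * v) :=
  Real.sqrt_pos.2 (by linarith)

lemma sqrt_sq' (v : ℝ) (hv : 0 < v) : Real.sqrt (1 + 4 * v) ^ 2 = 1 + 4 * v :=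
  Real.sq_sqrt (by linarith)

lemma lam_sub (v : ℝ) : lam1 v - lam2 v = Real.sqrt (1 + 4 * v) / phi := by
  rw [lam1, lam2]
  field_simp [phi_pos.ne']
  ring

lemma lam1_sq (v : ℝ) (hv : 0 < v) :
    lam1 v ^ 2 = lam1 v / phi + v / phi ^ 2 := by
  have hs := sqrt_sq' v hv
  rw [lam1]
  field_simp [phi_pos.ne']
  linear_combination hs

lemma lam2_sq (v : ℝ) (hv : 0 < v) :
    lam2 v ^ 2 = lam2 v / phi + v / phi ^ 2 := by
  have hs := sqrt_sq' v hv
  rw [lam2]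
  field_simp [phi_pos.ne']
  linear_combination hs

lemma coef_sum (v : ℝ) (hv : 0 < v) : aCoef v + bCoef v = 1 := by
  have hd : lam1 v - lam2 v ≠ 0 := by
    rw [lam_sub]
    exact div_ne_zero (sqrt_pos' v hv).ne' phi_pos.ne'
  have hd' : lam2 v - lam1 v ≠ 0 := fun h => hd (by linarith)
  rw [aCoef, bCoef]
  field_simp
  ring

lemma coef_sum1 (v : ℝ) (hv : 0 < v) :
    aCoef v * lam1 v + bCoef v * lam2 v = (phi ^ 2 + v) / (phi ^ 2 + 1) := by
  have hd : lam1 v - lam2 v ≠ 0 := by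
    rw [lam_sub]
    exact div_ne_zero (sqrt_pos' v hv).ne' phi_pos.ne'
  have hd' : lam2 v - lam1 v ≠ 0 := fun h => hd (by linarith)
  have hp1 : phi ^ 2 + 1 ≠ 0 := by positivity
  rw [aCoef, bCoef]
  field_simp
  ring

lemma mStep_zero (v : ℝ) (u : Fin 2 → ℝ) : mStep v u 0 = u 0 / phi + u 1 := by
  simp [mStep, zTrans, Fin.sum_univ_two]
  ring

lemma mStep_one (v : ℝ) (u : Fin 2 → ℝ) : mStep v u 1 = u 0 * v / phi ^ 2 := by
  simp [mStep, zTrans, Fin.sum_univ_two]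
  ring

lemma key (v : ℝ) (hv : 0 < v) (n : ℕ) :
    (mStep v)^[n] zInit 0 + (mStep v)^[n] zInit 1
      = aCoef v * lam1 v ^ n + bCoef v * lam2 v ^ n := by
  have hp1 : (phi : ℝ) ^ 2 + 1 ≠ 0 := by positivity
  have base0 : (mStep v)^[0] zInit 0 + (mStep v)^[0] zInit 1
      = aCoef v * lam1 v ^ 0 + bCoef v * lam2 v ^ 0 := by
    simp [zInit, coef_sum v hv]
    field_simp
  have base1 : (mStep v)^[1] zInit 0 + (mStep v)^[1] zInit 1
      = aCoef v * lam1 v ^ 1 + bCoef v * lam2 v ^ 1 := by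
    have h0 : zInit 0 = phi ^ 2 / (phi ^ 2 + 1) := by simp [zInit]
    have h1 : zInit 1 = 1 / (phi ^ 2 + 1) := by simp [zInit]
    simp only [Function.iterate_one, mStep_zero, mStep_one, pow_one, h0, h1]
    rw [coef_sum1 v hv]
    field_simp [phi_pos.ne']
    linear_combination ((-1)*phi^0) * phi_sq
  have main : ∀ m : ℕ,
      ((mStep v)^[m] zInit 0 + (mStep v)^[m] zInit 1
        = aCoef v * lam1 v ^ m + bCoef v * lam2 v ^ m) ∧
      ((mStep v)^[m+1] zInit 0 + (mStep v)^[m+1] zInit 1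
        = aCoef v * lam1 v ^ (m+1) + bCoef v * lam2 v ^ (m+1)) := by
    intro m
    induction m with
    | zero => exact ⟨base0, base1⟩
    | succ m ih =>
      refine ⟨ih.2, ?_⟩
      have hS : (mStep v)^[m+2] zInit 0 + (mStep v)^[m+2] zInit 1
          = ((mStep v)^[m+1] zInit 0 + (mStep v)^[m+1] zInit 1) / phi
            + v * ((mStep v)^[m] zInit 0 + (mStep v)^[m] zInit 1) / phi ^ 2 := by
        have e2 : (mStep v)^[m+2] zInit = mStep v ((mStep v)^[m+1] zInit) :=
          Function.iterate_succ_apply' _ _ _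
        have e1 : (mStep v)^[m+1] zInit = mStep v ((mStep v)^[m] zInit) :=
          Function.iterate_succ_apply' _ _ _
        rw [e2, e1]
        simp only [mStep_zero, mStep_one]
        ring
      rw [hS, ih.1, ih.2]
      have h1 : lam1 v ^ (m + 2) = lam1 v ^ (m+1) / phi + v * lam1 v ^ m / phi ^ 2 := by
        have : lam1 v ^ (m + 2) = lam1 v ^ m * lam1 v ^ 2 := by ring
        rw [this, lam1_sq v hv]
        ring
      have h2 : lam2 v ^ (m + 2) = lam2 v ^ (m+1) / phi + v * lam2 v ^ m / phi ^ 2 := by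
        have : lam2 v ^ (m + 2) = lam2 v ^ m * lam2 v ^ 2 := by ring
        rw [this, lam2_sq v hv]
        ring
      rw [h1, h2]
      ring
  exact (main n).1

/-- Probability generating function of `S n = Z 1 + ⋯ + Z n`:
`E[v^(S n)] = a(v)·λ₁(v)^n + b(v)·λ₂(v)^n`. -/
theorem markov_pgf (n : ℕ) (hn : 1 ≤ n) (v : ℝ) (hv : 0 < v) :
    (∑ z : Fin (n + 1) → Fin 2, pathProb n z * v ^ pathSum n z) =
      aCoef v * lam1 v ^ n + bCoef v * lam2 v ^ n := by
  have h : (∑ z : Fin (n + 1) → Fin 2, pathProb n z * v ^ pathSum n z) = mF v zInit n := by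
    rw [mF]
    exact Finset.sum_congr rfl fun z _ => path_rewrite v n z
  rw [h, mF_iter]
  exact key v hv n
end
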